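/- Let A = k⟨α₁,…,α_L⟩ with the quadratic double bracket {{α_i, α_j}} = Σ_{k,l} r^{kl}_{ij} α_k ⊗ α_l determined by a tensor r^{kl}_{ij} ∈ k (extended by the Leibniz rule), and let φ be either φ⁺ (reversal of words) or φ⁻ (signed reversal). Then the bracket is φ-adapted, i.e. (φ⊗φ)({{α_i,α_j}}) = {{φ(α_i),φ(α_j)}}°, if and only if r^{kl}_{ij} = r^{lk}_{ij} for all i,j,k,l. -/

import Mathlib

open TensorProduct

noncomputable section

theorem aux_basis_of (k : Type*) [Field k] (L : ℕ) (p : Fin L) :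
    FreeAlgebra.basisFreeMonoid k (Fin L) (FreeMonoid.of p) = FreeAlgebra.ι k p := by
  have h : FreeAlgebra.equivMonoidAlgebraFreeMonoid (FreeAlgebra.ι k p)
      = MonoidAlgebra.single (FreeMonoid.of p) (1:k) := by
    rw [FreeAlgebra.equivMonoidAlgebraFreeMonoid]
    simp [FreeAlgebra.lift_ι_apply]
  rw [FreeAlgebra.basisFreeMonoid, Module.Basis.map_apply]
  simp only [Finsupp.coe_basisSingleOne, AlgEquiv.toLinearEquiv_apply]
  show FreeAlgebra.equivMonoidAlgebraFreeMonoid.symm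
    (MonoidAlgebra.single (FreeMonoid.of p) (1:k)) = _
  rw [← h, AlgEquiv.symm_apply_apply]

theorem aux_li_gen (k : Type*) [Field k] (L : ℕ) :
    LinearIndependent k (fun pq : Fin L × Fin L =>
      (FreeAlgebra.ι k pq.1) ⊗ₜ[k] (FreeAlgebra.ι k pq.2)) := by
  have hb := ((FreeAlgebra.basisFreeMonoid k (Fin L)).tensorProduct
    (FreeAlgebra.basisFreeMonoid k (Fin L))).linearIndependent
  have hinj : Function.Injective (fun pq : Fin L × Fin L =>
      (FreeMonoid.of pq.1, FreeMonoid.of pq.2)) := by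
    intro x y h
    simp only [Prod.mk.injEq] at h
    exact Prod.ext (FreeMonoid.of_injective h.1) (FreeMonoid.of_injective h.2)
  have := hb.comp _ hinj
  convert this using 1
  funext pq
  simp [Module.Basis.tensorProduct_apply, aux_basis_of]
  all_goals rfl

/-- a quadratic double bracket on the free algebra determined by a tensor
`r^{kl}_{ij}` is adapted to `φ⁺` (word reversal) or `φ⁻` (signed word reversal)
if and only if `r^{kl}_{ij} = r^{lk}_{ij}`, i.e. the tensor is symmetric in the
upper indices. -/
theorem quadratic_bracket_adapted_iff
    (k : Type*) [Field k] [CharZero k] (L : ℕ)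
    (r : Fin L → Fin L → Fin L → Fin L → k)
    (D : FreeAlgebra k (Fin L) →ₗ[k] FreeAlgebra k (Fin L) →ₗ[k]
      FreeAlgebra k (Fin L) ⊗[k] FreeAlgebra k (Fin L))
    (hskew : ∀ a b, D a b = - (TensorProduct.comm k _ _) (D b a))
    (hleib : ∀ a b c, D a (b * c)
      = LinearMap.lTensor _ (LinearMap.mulRight k c) (D a b)
        + LinearMap.rTensor _ (LinearMap.mulLeft k b) (D a c))
    (hval : ∀ i j : Fin L, D (FreeAlgebra.ι k i) (FreeAlgebra.ι k j)
      = ∑ p : Fin L, ∑ q : Fin L, r p q i j • (FreeAlgebra.ι k p ⊗ₜ[k] FreeAlgebra.ι k q))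
    (φ : FreeAlgebra k (Fin L) →ₗ[k] FreeAlgebra k (Fin L))
    (hφanti : ∀ x y, φ (x * y) = φ y * φ x)
    (hφone : φ 1 = 1)
    (hφgen : (∀ i : Fin L, φ (FreeAlgebra.ι k i) = FreeAlgebra.ι k i)
      ∨ (∀ i : Fin L, φ (FreeAlgebra.ι k i) = - FreeAlgebra.ι k i)) :
    (∀ a b, TensorProduct.map φ φ (D a b) = (TensorProduct.comm k _ _) (D (φ a) (φ b)))
      ↔ (∀ p q i j : Fin L, r p q i j = r q p i j) := by
  -- `D` of the generators after applying φ
  have hφD : ∀ i j : Fin L, D (φ (FreeAlgebra.ι k i)) (φ (FreeAlgebra.ι k j))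
      = D (FreeAlgebra.ι k i) (FreeAlgebra.ι k j) := by
    intro i j
    rcases hφgen with hg | hg
    · rw [hg i, hg j]
    · simp only [hg, map_neg, LinearMap.neg_apply, neg_neg]
  -- `map φ φ` of the value on generators
  have hmapD : ∀ i j : Fin L, TensorProduct.map φ φ (D (FreeAlgebra.ι k i) (FreeAlgebra.ι k j))
      = ∑ p : Fin L, ∑ q : Fin L, r p q i j • (FreeAlgebra.ι k p ⊗ₜ[k] FreeAlgebra.ι k q) := by
    intro i j
    rw [hval]
    rw [map_sum]
    refine Finset.sum_congr rfl fun p _ => ?_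
    rw [map_sum]
    refine Finset.sum_congr rfl fun q _ => ?_
    rw [map_smul, TensorProduct.map_tmul]
    rcases hφgen with hg | hg
    · rw [hg p, hg q]
    · rw [hg p, hg q, TensorProduct.neg_tmul, TensorProduct.tmul_neg, neg_neg]
  have hcommD : ∀ i j : Fin L,
      (TensorProduct.comm k (FreeAlgebra k (Fin L)) (FreeAlgebra k (Fin L))) (D (FreeAlgebra.ι k i) (FreeAlgebra.ι k j))
      = ∑ p : Fin L, ∑ q : Fin L, r q p i j • (FreeAlgebra.ι k p ⊗ₜ[k] FreeAlgebra.ι k q) := by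
    intro i j
    rw [hval, map_sum]
    rw [Finset.sum_comm]
    refine Finset.sum_congr rfl fun p _ => ?_
    rw [map_sum]
    refine Finset.sum_congr rfl fun q _ => ?_
    rw [map_smul, TensorProduct.comm_tmul]
  constructor
  · -- forward direction
    intro h p q i j
    have key := h (FreeAlgebra.ι k i) (FreeAlgebra.ι k j)
    rw [hφD, hmapD, hcommD] at key
    have hsum : ∑ pq : Fin L × Fin L, (r pq.1 pq.2 i j - r pq.2 pq.1 i j) •
        ((FreeAlgebra.ι k pq.1 : (FreeAlgebra k (Fin L))) ⊗ₜ[k] FreeAlgebra.ι k pq.2) = 0 := by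
      rw [Fintype.sum_prod_type]
      have e : ∀ x y : Fin L, (r x y i j - r y x i j) • ((FreeAlgebra.ι k x : FreeAlgebra k (Fin L)) ⊗ₜ[k] FreeAlgebra.ι k y) = r x y i j • ((FreeAlgebra.ι k x : FreeAlgebra k (Fin L)) ⊗ₜ[k] FreeAlgebra.ι k y) - r y x i j • ((FreeAlgebra.ι k x : FreeAlgebra k (Fin L)) ⊗ₜ[k] FreeAlgebra.ι k y) := fun x y => sub_smul (M := FreeAlgebra k (Fin L) ⊗[k] FreeAlgebra k (Fin L)) _ _ _
      simp only [e, Finset.sum_sub_distrib]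
      rw [key, sub_self]
    have := (Fintype.linearIndependent_iff.mp (aux_li_gen k L)) _ hsum (p, q)
    exact sub_eq_zero.mp this
  · -- backward direction
    intro hr
    -- basic facts
    have hD1 : ∀ a : (FreeAlgebra k (Fin L)), D a (1 : (FreeAlgebra k (Fin L))) = 0 := by
      intro a
      have h := hleib a 1 1
      have h1 : LinearMap.mulRight k (1 : (FreeAlgebra k (Fin L))) = LinearMap.id := by ext x; simp
      have h2 : LinearMap.mulLeft k (1 : (FreeAlgebra k (Fin L))) = LinearMap.id := by ext x; simp
      rw [one_mul, h1, h2] at h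
      simp only [LinearMap.lTensor_id, LinearMap.rTensor_id, LinearMap.id_apply] at h
      exact (left_eq_add.mp h)
    have commcomm : ∀ x : (FreeAlgebra k (Fin L)) ⊗[k] (FreeAlgebra k (Fin L)),
        (TensorProduct.comm k (FreeAlgebra k (Fin L)) (FreeAlgebra k (Fin L))) ((TensorProduct.comm k (FreeAlgebra k (Fin L)) (FreeAlgebra k (Fin L))) x) = x := by
      intro x
      induction x using TensorProduct.induction_on with
      | zero => simp only [map_zero]
      | tmul x y => simp only [TensorProduct.comm_tmul]
      | add x y hx hy => simp only [map_add, hx, hy]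
    have commmap : ∀ x : (FreeAlgebra k (Fin L)) ⊗[k] (FreeAlgebra k (Fin L)), (TensorProduct.comm k (FreeAlgebra k (Fin L)) (FreeAlgebra k (Fin L))) (TensorProduct.map φ φ x)
        = TensorProduct.map φ φ ((TensorProduct.comm k (FreeAlgebra k (Fin L)) (FreeAlgebra k (Fin L))) x) := by
      intro x
      induction x using TensorProduct.induction_on with
      | zero => simp only [map_zero]
      | tmul x y => simp only [TensorProduct.map_tmul, TensorProduct.comm_tmul]
      | add x y hx hy => simp only [map_add, hx, hy]
    -- symmetry of the adaptedness relation
    have Psymm : ∀ a b : (FreeAlgebra k (Fin L)),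
        TensorProduct.map φ φ (D a b) = (TensorProduct.comm k (FreeAlgebra k (Fin L)) (FreeAlgebra k (Fin L))) (D (φ a) (φ b)) →
        TensorProduct.map φ φ (D b a) = (TensorProduct.comm k (FreeAlgebra k (Fin L)) (FreeAlgebra k (Fin L))) (D (φ b) (φ a)) := by
      intro a b hab
      rw [hskew b a, map_neg, ← commmap, hab, commcomm,
        hskew (φ b) (φ a), map_neg, commcomm]
    -- compatibility with products in the second argument
    have Pmul : ∀ a b c : (FreeAlgebra k (Fin L)),
        TensorProduct.map φ φ (D a b) = (TensorProduct.comm k (FreeAlgebra k (Fin L)) (FreeAlgebra k (Fin L))) (D (φ a) (φ b)) →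
        TensorProduct.map φ φ (D a c) = (TensorProduct.comm k (FreeAlgebra k (Fin L)) (FreeAlgebra k (Fin L))) (D (φ a) (φ c)) →
        TensorProduct.map φ φ (D a (b * c))
          = (TensorProduct.comm k (FreeAlgebra k (Fin L)) (FreeAlgebra k (Fin L))) (D (φ a) (φ (b * c))) := by
      intro a b c hab hac
      have comp1 : ∀ (c : (FreeAlgebra k (Fin L))) (x : (FreeAlgebra k (Fin L)) ⊗[k] (FreeAlgebra k (Fin L))), TensorProduct.map φ φ
          (LinearMap.lTensor (FreeAlgebra k (Fin L)) (LinearMap.mulRight k c) x)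
          = LinearMap.lTensor (FreeAlgebra k (Fin L)) (LinearMap.mulLeft k (φ c)) (TensorProduct.map φ φ x) := by
        intro c x
        induction x using TensorProduct.induction_on with
        | zero => simp only [map_zero]
        | tmul x y =>
            simp only [LinearMap.lTensor_tmul, TensorProduct.map_tmul,
              LinearMap.mulRight_apply, LinearMap.mulLeft_apply, hφanti]
        | add x y hx hy => simp only [map_add, hx, hy]
      have comp2 : ∀ (b : (FreeAlgebra k (Fin L))) (x : (FreeAlgebra k (Fin L)) ⊗[k] (FreeAlgebra k (Fin L))), TensorProduct.map φ φ
          (LinearMap.rTensor (FreeAlgebra k (Fin L)) (LinearMap.mulLeft k b) x)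
          = LinearMap.rTensor (FreeAlgebra k (Fin L)) (LinearMap.mulRight k (φ b)) (TensorProduct.map φ φ x) := by
        intro b x
        induction x using TensorProduct.induction_on with
        | zero => simp only [map_zero]
        | tmul x y =>
            simp only [LinearMap.rTensor_tmul, TensorProduct.map_tmul,
              LinearMap.mulRight_apply, LinearMap.mulLeft_apply, hφanti]
        | add x y hx hy => simp only [map_add, hx, hy]
      have comp3 : ∀ (f : (FreeAlgebra k (Fin L)) →ₗ[k] (FreeAlgebra k (Fin L))) (x : (FreeAlgebra k (Fin L)) ⊗[k] (FreeAlgebra k (Fin L))), (TensorProduct.comm k (FreeAlgebra k (Fin L)) (FreeAlgebra k (Fin L)))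
          (LinearMap.lTensor (FreeAlgebra k (Fin L)) f x)
          = LinearMap.rTensor (FreeAlgebra k (Fin L)) f ((TensorProduct.comm k (FreeAlgebra k (Fin L)) (FreeAlgebra k (Fin L))) x) := by
        intro f x
        induction x using TensorProduct.induction_on with
        | zero => simp only [map_zero]
        | tmul x y =>
            simp only [LinearMap.lTensor_tmul, LinearMap.rTensor_tmul,
              TensorProduct.comm_tmul]
        | add x y hx hy => simp only [map_add, hx, hy]
      have comp4 : ∀ (f : (FreeAlgebra k (Fin L)) →ₗ[k] (FreeAlgebra k (Fin L))) (x : (FreeAlgebra k (Fin L)) ⊗[k] (FreeAlgebra k (Fin L))), (TensorProduct.comm k (FreeAlgebra k (Fin L)) (FreeAlgebra k (Fin L)))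
          (LinearMap.rTensor (FreeAlgebra k (Fin L)) f x)
          = LinearMap.lTensor (FreeAlgebra k (Fin L)) f ((TensorProduct.comm k (FreeAlgebra k (Fin L)) (FreeAlgebra k (Fin L))) x) := by
        intro f x
        induction x using TensorProduct.induction_on with
        | zero => simp only [map_zero]
        | tmul x y =>
            simp only [LinearMap.lTensor_tmul, LinearMap.rTensor_tmul,
              TensorProduct.comm_tmul]
        | add x y hx hy => simp only [map_add, hx, hy]
      rw [hleib a b c, map_add]
      rw [comp1 c (D a b), comp2 b (D a c)]
      rw [hab, hac]
      rw [hφanti b c]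
      rw [hleib (φ a) (φ c) (φ b), map_add]
      rw [comp3 (LinearMap.mulRight k (φ b)) (D (φ a) (φ c)),
        comp4 (LinearMap.mulLeft k (φ c)) (D (φ a) (φ b))]
      exact add_comm _ _
    -- value on generators, using the symmetry of r
    have Pgen : ∀ i j : Fin L,
        TensorProduct.map φ φ (D (FreeAlgebra.ι k i) (FreeAlgebra.ι k j))
          = (TensorProduct.comm k (FreeAlgebra k (Fin L)) (FreeAlgebra k (Fin L)))
            (D (φ (FreeAlgebra.ι k i)) (φ (FreeAlgebra.ι k j))) := by
      intro i j
      rw [hφD, hmapD, hcommD]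
      refine Finset.sum_congr rfl fun p _ => Finset.sum_congr rfl fun q _ => ?_
      rw [hr p q i j]
    -- scalars
    have Palg : ∀ (a : (FreeAlgebra k (Fin L))) (c : k),
        TensorProduct.map φ φ (D a (algebraMap k (FreeAlgebra k (Fin L)) c))
          = (TensorProduct.comm k (FreeAlgebra k (Fin L)) (FreeAlgebra k (Fin L))) (D (φ a) (φ (algebraMap k (FreeAlgebra k (Fin L)) c))) := by
      intro a c
      have h1 : (algebraMap k (FreeAlgebra k (Fin L)) c) = c • (1 : (FreeAlgebra k (Fin L))) := Algebra.algebraMap_eq_smul_one c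
      rw [h1, map_smul φ, hφone, map_smul (D a), map_smul (D (φ a)), hD1, hD1]
      simp
    -- first: P (ι i) b for all b
    have Hgen2 : ∀ (i : Fin L) (b : (FreeAlgebra k (Fin L))),
        TensorProduct.map φ φ (D (FreeAlgebra.ι k i) b)
          = (TensorProduct.comm k (FreeAlgebra k (Fin L)) (FreeAlgebra k (Fin L))) (D (φ (FreeAlgebra.ι k i)) (φ b)) := by
      intro i b
      induction b using FreeAlgebra.induction with
      | grade0 c => exact Palg _ c
      | grade1 j => exact Pgen i j
      | mul x y hx hy => exact Pmul _ _ _ hx hy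
      | add x y hx hy => simp only [map_add, hx, hy]
    -- then: P a b for all a, b
    intro a b
    induction b using FreeAlgebra.induction with
    | grade0 c => exact Palg _ c
    | grade1 j => exact Psymm _ _ (Hgen2 j a)
    | mul x y hx hy => exact Pmul _ _ _ hx hy
    | add x y hx hy => simp only [map_add, hx, hy]

end
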